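/- For every odd integer k ≥ 5, the flower (Isaacs) snark J_k is a critical snark. -/

import Mathlib

/-- The colour set `K = (ℤ₂ × ℤ₂) ∖ {(0,0)}`. -/
abbrev Kol : Type := {x : ZMod 2 × ZMod 2 // x ≠ 0}

/-- A proper edge colouring: distinct edges sharing a vertex get distinct colours. -/
def IsProperEdgeColoring {V C : Type*} (G : SimpleGraph V) (f : Sym2 V → C) : Prop :=
  ∀ e₁ ∈ G.edgeSet, ∀ e₂ ∈ G.edgeSet, e₁ ≠ e₂ → (∃ v : V, v ∈ e₁ ∧ v ∈ e₂) → f e₁ ≠ f e₂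

/-- A graph is 3-edge-colourable if it has a proper edge colouring with three colours. -/
def ThreeEdgeColorable {V : Type*} (G : SimpleGraph V) : Prop :=
  ∃ f : Sym2 V → Kol, IsProperEdgeColoring G f

/-- A graph is cubic if every vertex has degree 3. -/
def IsCubic {V : Type*} (G : SimpleGraph V) : Prop :=
  ∀ v : V, (G.neighborSet v).ncard = 3

/-- A snark: a connected cubic simple graph which is not 3-edge-colourable. -/
def IsSnark {V : Type*} (G : SimpleGraph V) : Prop :=
  G.Connected ∧ IsCubic G ∧ ¬ ThreeEdgeColorable G

/-- A snark is critical if removing any two distinct adjacent vertices yields a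
3-edge-colourable graph. -/
def Critical {V : Type*} (G : SimpleGraph V) : Prop :=
  ∀ u v : V, G.Adj u v → ThreeEdgeColorable (G.induce ({u, v}ᶜ : Set V))

/-- A snark is bicritical if removing any two distinct vertices yields a
3-edge-colourable graph. -/
def Bicritical {V : Type*} (G : SimpleGraph V) : Prop :=
  ∀ u v : V, u ≠ v → ThreeEdgeColorable (G.induce ({u, v}ᶜ : Set V))

/-- Strictly critical: critical but not bicritical. -/
def StrictlyCritical {V : Type*} (G : SimpleGraph V) : Prop :=
  Critical G ∧ ¬ Bicritical G

/-- A cubic graph is cyclically `k`-connected if no set of fewer than `k` edges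
separates two cycles, i.e. there is no set `F` of fewer than `k` edges whose deletion
leaves a graph in which two connected components contain a cycle. -/
def CyclicallyConnected {V : Type*} (G : SimpleGraph V) (k : ℕ) : Prop :=
  ¬ ∃ F : Set (Sym2 V), F ⊆ G.edgeSet ∧ F.ncard < k ∧
    ∃ a b : V, (∃ w : (G.deleteEdges F).Walk a a, w.IsCycle) ∧
               (∃ w : (G.deleteEdges F).Walk b b, w.IsCycle) ∧
               ¬ (G.deleteEdges F).Reachable a b

/-- The cyclic connectivity of a cubic graph: the largest `k` (at most the number of
edges) such that the graph is cyclically `k`-connected. -/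
noncomputable def cyclicConnectivity {V : Type*} (G : SimpleGraph V) : ℕ :=
  sSup {k | k ≤ G.edgeSet.ncard ∧ CyclicallyConnected G k}

/-- The flower (Isaacs) snark `J_k`: vertices `a_i = (0, i)`, `b_i = (1, i)`,
`c_i = (2, i)`, `d_i = (3, i)` for `i ∈ ℤ/k`, with edges `a_i b_i`, `a_i c_i`,
`a_i d_i`, `b_i b_{i+1}`, `c_i d_{i+1}`, `d_i c_{i+1}`. -/
def flowerSnark (k : ℕ) : SimpleGraph (Fin 4 × ZMod k) :=
  SimpleGraph.fromRel (fun p q =>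
    ∃ i : ZMod k,
      (p = (0, i) ∧ (q = (1, i) ∨ q = (2, i) ∨ q = (3, i))) ∨
      (p = (1, i) ∧ q = (1, i + 1)) ∨
      (p = (2, i) ∧ q = (3, i + 1)) ∨
      (p = (3, i) ∧ q = (2, i + 1)))

namespace FS

def A : Kol := ⟨(1,0), by decide⟩
def B : Kol := ⟨(0,1), by decide⟩
def C : Kol := ⟨(1,1), by decide⟩

def enc (x : Kol) : ℕ := if x = A then 1 else if x = B then 2 else 3

def P (x y z : Kol) : Bool :=
  (9 * enc x + 3 * enc y + enc z) ∈ [20,21,24,27,29,30,33,34,35,36,37,38]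

set_option maxRecDepth 100000 in
set_option synthInstance.maxHeartbeats 1000000 in
set_option synthInstance.maxSize 2000 in
set_option maxHeartbeats 4000000 in
lemma step (p1 p2 p3 q1 q2 q3 a b c : Kol)
    (hab : a ≠ b) (hac : a ≠ c) (hbc : b ≠ c)
    (h1 : p1 ≠ q1) (h2 : p1 ≠ a) (h3 : q1 ≠ a)
    (h4 : p3 ≠ q2) (h5 : p3 ≠ b) (h6 : q2 ≠ b)
    (h7 : p2 ≠ q3) (h8 : p2 ≠ c) (h9 : q3 ≠ c) :
    P q1 q2 q3 = !P p1 p2 p3 := by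
  revert hab hac hbc h1 h2 h3 h4 h5 h6 h7 h8 h9
  revert p1 p2 p3 q1 q2 q3 a b c
  decide

variable {k : ℕ}

abbrev V (k : ℕ) := Fin 4 × ZMod k

lemma sub_one_ne (h2 : (2 : ZMod k) ≠ 0) (m : ZMod k) : m - 1 ≠ m + 1 :=
  fun h => h2 (by linear_combination -h)

lemma add_one_ne (h1 : (1 : ZMod k) ≠ 0) (m : ZMod k) : m + 1 ≠ m :=
  fun h => h1 (by linear_combination h)

lemma one_sub_ne (h1 : (1 : ZMod k) ≠ 0) (m : ZMod k) : m - 1 ≠ m :=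
  fun h => h1 (by linear_combination -h)

lemma adj_a_iff (m : ZMod k) (q : V k) :
    (flowerSnark k).Adj (0, m) q ↔ q = (1, m) ∨ q = (2, m) ∨ q = (3, m) := by
  rw [flowerSnark, SimpleGraph.fromRel_adj]
  constructor
  · rintro ⟨hne, ⟨i, h | h | h | h⟩ | ⟨i, h | h | h | h⟩⟩ <;>
      simp_all [Prod.ext_iff]
  · rintro (rfl | rfl | rfl) <;>
      exact ⟨by simp [Prod.ext_iff], Or.inl ⟨m, Or.inl ⟨rfl, by simp⟩⟩⟩

lemma adj_b_iff (h1 : (1 : ZMod k) ≠ 0) (h2 : (2 : ZMod k) ≠ 0) (m : ZMod k) (q : V k) :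
    (flowerSnark k).Adj (1, m) q ↔ q = (0, m) ∨ q = (1, m + 1) ∨ q = (1, m - 1) := by
  rw [flowerSnark, SimpleGraph.fromRel_adj]
  constructor
  · rintro ⟨hne, ⟨i, h | h | h | h⟩ | ⟨i, h | h | h | h⟩⟩ <;>
      simp_all [Prod.ext_iff]
  · rintro (rfl | rfl | rfl)
    · exact ⟨by simp [Prod.ext_iff], Or.inr ⟨m, Or.inl ⟨rfl, by simp⟩⟩⟩
    · exact ⟨fun h => add_one_ne h1 m (congrArg Prod.snd h).symm,
        Or.inl ⟨m, Or.inr (Or.inl ⟨rfl, rfl⟩)⟩⟩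
    · exact ⟨fun h => one_sub_ne h1 m (congrArg Prod.snd h).symm,
        Or.inr ⟨m - 1, Or.inr (Or.inl ⟨rfl, by simp⟩)⟩⟩

lemma adj_c_iff (h1 : (1 : ZMod k) ≠ 0) (h2 : (2 : ZMod k) ≠ 0) (m : ZMod k) (q : V k) :
    (flowerSnark k).Adj (2, m) q ↔ q = (0, m) ∨ q = (3, m + 1) ∨ q = (3, m - 1) := by
  rw [flowerSnark, SimpleGraph.fromRel_adj]
  constructor
  · rintro ⟨hne, ⟨i, h | h | h | h⟩ | ⟨i, h | h | h | h⟩⟩ <;>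
      simp_all [Prod.ext_iff]
  · rintro (rfl | rfl | rfl)
    · exact ⟨by simp [Prod.ext_iff], Or.inr ⟨m, Or.inl ⟨rfl, by simp⟩⟩⟩
    · exact ⟨by simp [Prod.ext_iff], Or.inl ⟨m, Or.inr (Or.inr (Or.inl ⟨rfl, rfl⟩))⟩⟩
    · exact ⟨by simp [Prod.ext_iff], Or.inr ⟨m - 1, Or.inr (Or.inr (Or.inr ⟨rfl, by simp⟩))⟩⟩

lemma adj_d_iff (h1 : (1 : ZMod k) ≠ 0) (h2 : (2 : ZMod k) ≠ 0) (m : ZMod k) (q : V k) :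
    (flowerSnark k).Adj (3, m) q ↔ q = (0, m) ∨ q = (2, m + 1) ∨ q = (2, m - 1) := by
  rw [flowerSnark, SimpleGraph.fromRel_adj]
  constructor
  · rintro ⟨hne, ⟨i, h | h | h | h⟩ | ⟨i, h | h | h | h⟩⟩ <;>
      simp_all [Prod.ext_iff]
  · rintro (rfl | rfl | rfl)
    · exact ⟨by simp [Prod.ext_iff], Or.inr ⟨m, Or.inl ⟨rfl, by simp⟩⟩⟩
    · exact ⟨by simp [Prod.ext_iff], Or.inl ⟨m, Or.inr (Or.inr (Or.inr ⟨rfl, rfl⟩))⟩⟩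
    · exact ⟨by simp [Prod.ext_iff], Or.inr ⟨m - 1, Or.inr (Or.inr (Or.inl ⟨rfl, by simp⟩))⟩⟩


lemma adj_cases (p q : V k) (h : (flowerSnark k).Adj p q) :
    (∃ m, p = (0,m) ∧ (q = (1,m) ∨ q = (2,m) ∨ q = (3,m))) ∨
    (∃ m, p = (1,m) ∧ (q = (0,m) ∨ q = (1,m+1) ∨ q = (1,m-1))) ∨
    (∃ m, p = (2,m) ∧ (q = (0,m) ∨ q = (3,m+1) ∨ q = (3,m-1))) ∨
    (∃ m, p = (3,m) ∧ (q = (0,m) ∨ q = (2,m+1) ∨ q = (2,m-1))) := by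
  rw [flowerSnark, SimpleGraph.fromRel_adj] at h
  obtain ⟨-, ⟨i, h | h | h | h⟩ | ⟨i, h | h | h | h⟩⟩ := h
  · exact Or.inl ⟨i, h⟩
  · exact Or.inr (Or.inl ⟨i, h.1, Or.inr (Or.inl h.2)⟩)
  · exact Or.inr (Or.inr (Or.inl ⟨i, h.1, Or.inr (Or.inl h.2)⟩))
  · exact Or.inr (Or.inr (Or.inr ⟨i, h.1, Or.inr (Or.inl h.2)⟩))
  · rcases h.2 with h2 | h2 | h2
    · exact Or.inr (Or.inl ⟨i, h2, Or.inl h.1⟩)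
    · exact Or.inr (Or.inr (Or.inl ⟨i, h2, Or.inl h.1⟩))
    · exact Or.inr (Or.inr (Or.inr ⟨i, h2, Or.inl h.1⟩))
  · exact Or.inr (Or.inl ⟨i + 1, h.2, Or.inr (Or.inr (by rw [h.1]; norm_num))⟩)
  · exact Or.inr (Or.inr (Or.inr ⟨i + 1, h.2, Or.inr (Or.inr (by rw [h.1]; norm_num))⟩))
  · exact Or.inr (Or.inr (Or.inl ⟨i + 1, h.2, Or.inr (Or.inr (by rw [h.1]; norm_num))⟩))


def mk6 (cAB cAC cAD cBB cCD cDC : ℕ → Kol) (p q : V k) : Kol :=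
  match p.1.val, q.1.val with
  | 0, 1 => if q.2 = p.2 then cAB p.2.val else A
  | 1, 0 => if p.2 = q.2 then cAB q.2.val else A
  | 0, 2 => if q.2 = p.2 then cAC p.2.val else A
  | 2, 0 => if p.2 = q.2 then cAC q.2.val else A
  | 0, 3 => if q.2 = p.2 then cAD p.2.val else A
  | 3, 0 => if p.2 = q.2 then cAD q.2.val else A
  | 1, 1 => if q.2 = p.2 + 1 then cBB p.2.val else if p.2 = q.2 + 1 then cBB q.2.val else A
  | 2, 3 => if q.2 = p.2 + 1 then cCD p.2.val else if p.2 = q.2 + 1 then cDC q.2.val else A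
  | 3, 2 => if q.2 = p.2 + 1 then cDC p.2.val else if p.2 = q.2 + 1 then cCD q.2.val else A
  | _, _ => A

lemma sub_one_ne' (h2 : (2 : ZMod k) ≠ 0) {m n : ZMod k} (ha : n = m + 1) (hb : m = n + 1) : False := by
  apply h2; rw [ha] at hb; linear_combination -hb

lemma mk6_symm (h2 : (2 : ZMod k) ≠ 0) (cAB cAC cAD cBB cCD cDC : ℕ → Kol) (p q : V k) :
    mk6 cAB cAC cAD cBB cCD cDC p q = mk6 cAB cAC cAD cBB cCD cDC q p := by
  obtain ⟨x, m⟩ := p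
  obtain ⟨y, n⟩ := q
  fin_cases x <;> fin_cases y <;> simp only [mk6] <;>
    split_ifs <;> first
      | rfl
      | (exfalso; exact sub_one_ne' h2 ‹_› ‹_›)
      | (rename_i hh _; rw [hh])
      | simp_all


section evals
variable (cAB cAC cAD cBB cCD cDC : ℕ → Kol)
local notation "g" => mk6 (k := k) cAB cAC cAD cBB cCD cDC

lemma ev_ab (m : ZMod k) : g (0, m) (1, m) = cAB m.val := by simp [mk6]
lemma ev_ab' (m : ZMod k) : g (1, m) (0, m) = cAB m.val := by simp [mk6]
lemma ev_ac (m : ZMod k) : g (0, m) (2, m) = cAC m.val := by simp [mk6]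
lemma ev_ac' (m : ZMod k) : g (2, m) (0, m) = cAC m.val := by simp [mk6]
lemma ev_ad (m : ZMod k) : g (0, m) (3, m) = cAD m.val := by simp [mk6]
lemma ev_ad' (m : ZMod k) : g (3, m) (0, m) = cAD m.val := by simp [mk6]
lemma ev_bb (m : ZMod k) : g (1, m) (1, m + 1) = cBB m.val := by simp [mk6]
lemma ev_bb' (h2 : (2 : ZMod k) ≠ 0) (m : ZMod k) : g (1, m) (1, m - 1) = cBB (m - 1).val := by
  rw [mk6]
  simp only [Fin.isValue, Fin.val_one, Fin.val_two, Fin.coe_ofNat_eq_mod, Nat.reduceMod]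
  rw [if_neg (fun h => sub_one_ne' h2 h (by ring)), if_pos (show m = m - 1 + 1 by ring)]
lemma ev_cd (m : ZMod k) : g (2, m) (3, m + 1) = cCD m.val := by simp [mk6]
lemma ev_cd' (h2 : (2 : ZMod k) ≠ 0) (m : ZMod k) : g (3, m) (2, m - 1) = cCD (m - 1).val := by
  rw [mk6]; simp only [Fin.isValue, Fin.val_one, Fin.val_two, Fin.coe_ofNat_eq_mod, Nat.reduceMod]
  rw [if_neg (fun h => sub_one_ne' h2 h (by ring)), if_pos (show m = m - 1 + 1 by ring)]
lemma ev_dc (m : ZMod k) : g (3, m) (2, m + 1) = cDC m.val := by simp [mk6]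
lemma ev_dc' (h2 : (2 : ZMod k) ≠ 0) (m : ZMod k) : g (2, m) (3, m - 1) = cDC (m - 1).val := by
  rw [mk6]; simp only [Fin.isValue, Fin.val_one, Fin.val_two, Fin.coe_ofNat_eq_mod, Nat.reduceMod]
  rw [if_neg (fun h => sub_one_ne' h2 h (by ring)), if_pos (show m = m - 1 + 1 by ring)]


end evals

lemma induced_colorable {VV : Type*} (G : SimpleGraph VV) (S : Set VV)
    (g : VV → VV → Kol) (hsym : ∀ p q, g p q = g q p)
    (H : ∀ p q r : VV, p ∈ S → q ∈ S → r ∈ S → G.Adj p q → G.Adj p r → q ≠ r →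
      g p q ≠ g p r) :
    ThreeEdgeColorable (G.induce S) := by
  refine ⟨fun e => Sym2.lift ⟨g, hsym⟩ (e.map Subtype.val), ?_⟩
  intro e1 he1 e2 he2 hne hsh
  obtain ⟨v, hv1, hv2⟩ := hsh
  induction e1 with
  | _ a b =>
  induction e2 with
  | _ c d =>
  rw [SimpleGraph.mem_edgeSet] at he1 he2
  rw [Sym2.mem_iff] at hv1 hv2
  have hab : G.Adj a.val b.val := he1
  have hcd : G.Adj c.val d.val := he2
  simp only [Sym2.map_pair_eq, Sym2.lift_mk]
  have key : ∀ (x y z : VV) (hy : y ∈ S) (hz : z ∈ S), x ∈ S → G.Adj x y → G.Adj x z → y ≠ z →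
      g x y ≠ g x z := fun x y z hy hz hx h1 h2 h3 => H x y z hx hy hz h1 h2 h3
  rcases hv1 with rfl | rfl <;> rcases hv2 with rfl | rfl
  · -- v = a = c
    have hbd : b ≠ d := fun h => hne (by rw [h])
    exact key v.val b.val d.val b.2 d.2 v.2 hab hcd (fun h => hbd (Subtype.ext h))
  · -- a = v, d = v
    have hbc : b ≠ c := fun h => hne (by rw [h, Sym2.eq_swap])
    rw [hsym c.val v.val]
    exact key v.val b.val c.val b.2 c.2 v.2 hab hcd.symm (fun h => hbc (Subtype.ext h))
  · -- b = v, c = v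
    have had : a ≠ d := fun h => hne (by rw [h, Sym2.eq_swap])
    rw [hsym a.val v.val]
    exact key v.val a.val d.val a.2 d.2 v.2 hab.symm hcd (fun h => had (Subtype.ext h))
  · -- b = v, d = v
    have hac : a ≠ c := fun h => hne (by rw [h])
    rw [hsym a.val v.val, hsym c.val v.val]
    exact key v.val a.val c.val a.2 c.2 v.2 hab.symm hcd.symm (fun h => hac (Subtype.ext h))


section verifysec
variable {k : ℕ} (h1 : (1 : ZMod k) ≠ 0) (h2 : (2 : ZMod k) ≠ 0)
  (S : Set (V k)) (cAB cAC cAD cBB cCD cDC : ℕ → Kol)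

include h1 h2 in
lemma verify
    (Hbc : ∀ m : ZMod k, (0,m) ∈ S → (1,m) ∈ S → (2,m) ∈ S → cAB m.val ≠ cAC m.val)
    (Hbd : ∀ m : ZMod k, (0,m) ∈ S → (1,m) ∈ S → (3,m) ∈ S → cAB m.val ≠ cAD m.val)
    (Hcd : ∀ m : ZMod k, (0,m) ∈ S → (2,m) ∈ S → (3,m) ∈ S → cAC m.val ≠ cAD m.val)
    (Hb1 : ∀ m : ZMod k, (0,m) ∈ S → (1,m) ∈ S → (1,m+1) ∈ S → cAB m.val ≠ cBB m.val)
    (Hb2 : ∀ m : ZMod k, (0,m) ∈ S → (1,m) ∈ S → (1,m-1) ∈ S → cAB m.val ≠ cBB (m-1).val)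
    (Hb3 : ∀ m : ZMod k, (1,m-1) ∈ S → (1,m) ∈ S → (1,m+1) ∈ S → cBB m.val ≠ cBB (m-1).val)
    (Hc1 : ∀ m : ZMod k, (0,m) ∈ S → (2,m) ∈ S → (3,m+1) ∈ S → cAC m.val ≠ cCD m.val)
    (Hc2 : ∀ m : ZMod k, (0,m) ∈ S → (2,m) ∈ S → (3,m-1) ∈ S → cAC m.val ≠ cDC (m-1).val)
    (Hc3 : ∀ m : ZMod k, (3,m-1) ∈ S → (2,m) ∈ S → (3,m+1) ∈ S → cCD m.val ≠ cDC (m-1).val)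
    (Hd1 : ∀ m : ZMod k, (0,m) ∈ S → (3,m) ∈ S → (2,m+1) ∈ S → cAD m.val ≠ cDC m.val)
    (Hd2 : ∀ m : ZMod k, (0,m) ∈ S → (3,m) ∈ S → (2,m-1) ∈ S → cAD m.val ≠ cCD (m-1).val)
    (Hd3 : ∀ m : ZMod k, (2,m-1) ∈ S → (3,m) ∈ S → (2,m+1) ∈ S → cDC m.val ≠ cCD (m-1).val) :
    ThreeEdgeColorable ((flowerSnark k).induce S) := by
  apply induced_colorable _ S (mk6 cAB cAC cAD cBB cCD cDC) (mk6_symm h2 _ _ _ _ _ _)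
  intro p q r hp hq hr hpq hpr hqr
  rcases adj_cases p q hpq with ⟨m, rfl, hq3⟩ | ⟨m, rfl, hq3⟩ | ⟨m, rfl, hq3⟩ | ⟨m, rfl, hq3⟩
  · rw [adj_a_iff] at hpr
    rcases hq3 with rfl | rfl | rfl <;> rcases hpr with rfl | rfl | rfl
    · exact absurd rfl hqr
    · rw [ev_ab, ev_ac]; exact Hbc m hp hq hr
    · rw [ev_ab, ev_ad]; exact Hbd m hp hq hr
    · rw [ev_ac, ev_ab]; exact (Hbc m hp hr hq).symm
    · exact absurd rfl hqr
    · rw [ev_ac, ev_ad]; exact Hcd m hp hq hr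
    · rw [ev_ad, ev_ab]; exact (Hbd m hp hr hq).symm
    · rw [ev_ad, ev_ac]; exact (Hcd m hp hr hq).symm
    · exact absurd rfl hqr
  · rw [adj_b_iff h1 h2] at hpr
    rcases hq3 with rfl | rfl | rfl <;> rcases hpr with rfl | rfl | rfl
    · exact absurd rfl hqr
    · rw [ev_ab', ev_bb]; exact Hb1 m hq hp hr
    · rw [ev_ab', ev_bb' _ _ _ _ _ _ h2]; exact Hb2 m hq hp hr
    · rw [ev_bb, ev_ab']; exact (Hb1 m hr hp hq).symm
    · exact absurd rfl hqr
    · rw [ev_bb, ev_bb' _ _ _ _ _ _ h2]; exact Hb3 m hr hp hq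
    · rw [ev_bb' _ _ _ _ _ _ h2, ev_ab']; exact (Hb2 m hr hp hq).symm
    · rw [ev_bb' _ _ _ _ _ _ h2, ev_bb]; exact (Hb3 m hq hp hr).symm
    · exact absurd rfl hqr
  · rw [adj_c_iff h1 h2] at hpr
    rcases hq3 with rfl | rfl | rfl <;> rcases hpr with rfl | rfl | rfl
    · exact absurd rfl hqr
    · rw [ev_ac', ev_cd]; exact Hc1 m hq hp hr
    · rw [ev_ac', ev_dc' _ _ _ _ _ _ h2]; exact Hc2 m hq hp hr
    · rw [ev_cd, ev_ac']; exact (Hc1 m hr hp hq).symm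
    · exact absurd rfl hqr
    · rw [ev_cd, ev_dc' _ _ _ _ _ _ h2]; exact Hc3 m hr hp hq
    · rw [ev_dc' _ _ _ _ _ _ h2, ev_ac']; exact (Hc2 m hr hp hq).symm
    · rw [ev_dc' _ _ _ _ _ _ h2, ev_cd]; exact (Hc3 m hq hp hr).symm
    · exact absurd rfl hqr
  · rw [adj_d_iff h1 h2] at hpr
    rcases hq3 with rfl | rfl | rfl <;> rcases hpr with rfl | rfl | rfl
    · exact absurd rfl hqr
    · rw [ev_ad', ev_dc]; exact Hd1 m hq hp hr
    · rw [ev_ad', ev_cd' _ _ _ _ _ _ h2]; exact Hd2 m hq hp hr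
    · rw [ev_dc, ev_ad']; exact (Hd1 m hr hp hq).symm
    · exact absurd rfl hqr
    · rw [ev_dc, ev_cd' _ _ _ _ _ _ h2]; exact Hd3 m hr hp hq
    · rw [ev_cd' _ _ _ _ _ _ h2, ev_ad']; exact (Hd2 m hr hp hq).symm
    · rw [ev_cd' _ _ _ _ _ _ h2, ev_dc]; exact (Hd3 m hq hp hr).symm
    · exact absurd rfl hqr
end verifysec

section valhelpers
variable {k : ℕ} [NeZero k] {m : ZMod k}

lemma natCast_val_self (m : ZMod k) : ((m.val : ℕ) : ZMod k) = m :=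
  ZMod.natCast_rightInverse m

lemma vne_of_ne0 (h : m ≠ 0) : m.val ≠ 0 := by rwa [Ne, ZMod.val_eq_zero]

lemma val_sub_one (h : m ≠ 0) : (m - 1).val = m.val - 1 := by
  have h1 : 1 ≤ m.val := Nat.one_le_iff_ne_zero.2 (vne_of_ne0 h)
  have : m - 1 = ((m.val - 1 : ℕ) : ZMod k) := by
    rw [Nat.cast_sub h1, Nat.cast_one, natCast_val_self]
  rw [this, ZMod.val_natCast, Nat.mod_eq_of_lt (by have := ZMod.val_lt m; omega)]

lemma zero_sub_one_val (hk : 1 ≤ k) : ((0 : ZMod k) - 1).val = k - 1 := by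
  obtain ⟨n, rfl⟩ : ∃ n, k = n + 1 := ⟨k - 1, by omega⟩
  rw [zero_sub, ZMod.val_neg_one]
  omega

lemma vne_of_ne_one (hk : 1 < k) (h : m ≠ 1) : m.val ≠ 1 := by
  intro hv
  exact h (by rw [← natCast_val_self m, hv, Nat.cast_one])

lemma vne_of_ne_two (hk : 2 < k) (h : m ≠ 2) : m.val ≠ 2 := by
  intro hv
  apply h
  rw [← natCast_val_self m, hv]
  norm_num

lemma vne_top (h : m + 1 ≠ 0) : m.val ≠ k - 1 := by
  intro hv
  apply h
  have hk : 1 ≤ k := Nat.one_le_iff_ne_zero.2 (NeZero.ne k)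
  have : m + 1 = (((k - 1) + 1 : ℕ) : ZMod k) := by
    rw [Nat.cast_add, Nat.cast_one, ← hv, natCast_val_self m]
  rw [this, show k - 1 + 1 = k by omega, ZMod.natCast_self]

lemma ne_snd {x : Fin 4} {m c : ZMod k} (h : ((x,m) : V k) ≠ (x,c)) : m ≠ c :=
  fun hh => h (by rw [hh])

end valhelpers

lemma mem_pair_compl {X : Type*} {u v p : X} : p ∈ ({u,v}ᶜ : Set X) ↔ p ≠ u ∧ p ≠ v := by
  simp [not_or]

/-! ### The four colouring schemes -/

def s1AB (t : ℕ) : Kol := B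
def s1AC (t : ℕ) : Kol := if t % 2 = 0 then C else A
def s1AD (t : ℕ) : Kol := if t % 2 = 0 then A else C
def s1BB (t : ℕ) : Kol := if t % 2 = 0 then A else C
def s1CD (t : ℕ) : Kol := B
def s1DC (t : ℕ) : Kol := if t % 2 = 0 then C else A

def s2AB (t : ℕ) : Kol := if t = 1 then C else A
def s2AC (t : ℕ) : Kol := if t % 2 = 1 ∧ t ≠ 1 then C else B
def s2AD (t : ℕ) : Kol := if t = 1 then A else if t % 2 = 0 then C else B
def s2BB (t : ℕ) : Kol := if t = 0 then A else if t % 2 = 1 then B else C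
def s2CD (t : ℕ) : Kol := if t = 0 then B else A
def s2DC (t : ℕ) : Kol := if t = 0 then C else if t % 2 = 1 then C else B

def s3AB (k t : ℕ) : Kol := if t ≤ 1 then B else if t = 2 then C else if t = k-1 then B else A
def s3AC (k t : ℕ) : Kol :=
  if t ≤ 1 then C else if t = 2 then B else if t = k-1 then A else if t % 2 = 0 then C else B
def s3AD (k t : ℕ) : Kol :=
  if t ≤ 1 then B else if t = 2 then A else if t = k-1 then C else if t % 2 = 0 then B else C
def s3BB (k t : ℕ) : Kol :=
  if t ≤ 1 then A else if t = 2 then B else if t = k-1 then A else if t % 2 = 1 then C else B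
def s3CD (k t : ℕ) : Kol := if t = 0 then A else if t = 1 then B else if t = k-1 then C else A
def s3DC (k t : ℕ) : Kol :=
  if t = 0 then A else if t = 1 then C else if t = k-1 then B else if t % 2 = 1 then B else C

def s4AB (t : ℕ) : Kol := if t = 0 then B else if t = 1 then A else if t = 2 then C else B
def s4AC (t : ℕ) : Kol := if t ≤ 1 then B else if t = 2 then A else if t % 2 = 0 then C else A
def s4AD (t : ℕ) : Kol := if t ≤ 1 then A else if t = 2 then B else if t % 2 = 0 then A else C
def s4BB (t : ℕ) : Kol := if t = 0 then C else if t = 1 then B else if t % 2 = 0 then A else C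
def s4CD (t : ℕ) : Kol := if t = 0 then B else if t = 1 then A else B
def s4DC (t : ℕ) : Kol := if t = 0 then C else if t = 1 then B else if t % 2 = 0 then C else A

section schemes
variable {k : ℕ}

lemma one_ne_zero' (hk : 5 ≤ k) : (1 : ZMod k) ≠ 0 := by
  haveI : NeZero k := ⟨by omega⟩
  intro h
  rw [← Nat.cast_one, ZMod.natCast_eq_zero_iff] at h
  have := Nat.le_of_dvd one_pos h
  omega

lemma two_ne_zero' (hk : 5 ≤ k) : (2 : ZMod k) ≠ 0 := by
  haveI : NeZero k := ⟨by omega⟩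
  intro h
  rw [show ((2:ZMod k) = ((2:ℕ):ZMod k)) by norm_num, ZMod.natCast_eq_zero_iff] at h
  have := Nat.le_of_dvd two_pos h
  omega

lemma scheme1 (hk : 5 ≤ k) (hodd : Odd k) :
    ThreeEdgeColorable ((flowerSnark k).induce
      ({((0:Fin 4),(0:ZMod k)), ((1:Fin 4),(0:ZMod k))}ᶜ : Set (V k))) := by
  haveI : NeZero k := ⟨by omega⟩
  have hko := Nat.odd_iff.mp hodd
  have h1 := one_ne_zero' hk
  have h2 := two_ne_zero' hk
  refine verify h1 h2 _ s1AB s1AC s1AD s1BB s1CD s1DC ?_ ?_ ?_ ?_ ?_ ?_ ?_ ?_ ?_ ?_ ?_ ?_ <;>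
    intro m hx hy hz
  · simp only [s1AB, s1AC]; split_ifs <;> decide
  · simp only [s1AB, s1AD]; split_ifs <;> decide
  · simp only [s1AC, s1AD]; split_ifs <;> decide
  · simp only [s1AB, s1BB]; split_ifs <;> decide
  · simp only [s1AB, s1BB]; split_ifs <;> decide
  · -- Hb3
    have hm : m ≠ 0 := ne_snd (mem_pair_compl.mp hy).2
    have hv := vne_of_ne0 hm
    have hlt := ZMod.val_lt m
    rw [val_sub_one hm]
    simp only [s1BB]; split_ifs <;> first | decide | (exfalso; omega)
  · simp only [s1AC, s1CD]; split_ifs <;> decide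
  · -- Hc2
    have hm : m ≠ 0 := ne_snd (mem_pair_compl.mp hx).1
    have hv := vne_of_ne0 hm
    have hlt := ZMod.val_lt m
    rw [val_sub_one hm]
    simp only [s1AC, s1DC]; split_ifs <;> first | decide | (exfalso; omega)
  · simp only [s1CD, s1DC]; split_ifs <;> decide
  · simp only [s1AD, s1DC]; split_ifs <;> decide
  · simp only [s1AD, s1CD]; split_ifs <;> decide
  · simp only [s1DC, s1CD]; split_ifs <;> decide

lemma scheme2 (hk : 5 ≤ k) (hodd : Odd k) :
    ThreeEdgeColorable ((flowerSnark k).induce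
      ({((0:Fin 4),(0:ZMod k)), ((2:Fin 4),(0:ZMod k))}ᶜ : Set (V k))) := by
  haveI : NeZero k := ⟨by omega⟩
  have hko := Nat.odd_iff.mp hodd
  have h1 := one_ne_zero' hk
  have h2 := two_ne_zero' hk
  refine verify h1 h2 _ s2AB s2AC s2AD s2BB s2CD s2DC ?_ ?_ ?_ ?_ ?_ ?_ ?_ ?_ ?_ ?_ ?_ ?_ <;>
    intro m hx hy hz <;>
    (try have hlt := ZMod.val_lt m)
  · simp only [s2AB, s2AC]; split_ifs <;> first | decide | (exfalso; omega)
  · simp only [s2AB, s2AD]; split_ifs <;> first | decide | (exfalso; omega)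
  · simp only [s2AC, s2AD]; split_ifs <;> first | decide | (exfalso; omega)
  · -- Hb1
    have hm : m ≠ 0 := ne_snd (mem_pair_compl.mp hx).1
    have hv := vne_of_ne0 hm
    simp only [s2AB, s2BB]; split_ifs <;> first | decide | (exfalso; omega)
  · -- Hb2
    have hm : m ≠ 0 := ne_snd (mem_pair_compl.mp hx).1
    have hv := vne_of_ne0 hm
    rw [val_sub_one hm]
    simp only [s2AB, s2BB]; split_ifs <;> first | decide | (exfalso; omega)
  · -- Hb3 : no guard, case split
    rcases eq_or_ne m 0 with rfl | hm
    · rw [zero_sub_one_val (by omega), ZMod.val_zero]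
      simp only [s2BB]; split_ifs <;> first | decide | (exfalso; omega)
    · have hv := vne_of_ne0 hm
      rw [val_sub_one hm]
      simp only [s2BB]; split_ifs <;> first | decide | (exfalso; omega)
  · -- Hc1
    have hm : m ≠ 0 := ne_snd (mem_pair_compl.mp hx).1
    have hv := vne_of_ne0 hm
    simp only [s2AC, s2CD]; split_ifs <;> first | decide | (exfalso; omega)
  · -- Hc2
    have hm : m ≠ 0 := ne_snd (mem_pair_compl.mp hx).1
    have hv := vne_of_ne0 hm
    rw [val_sub_one hm]
    simp only [s2AC, s2DC]; split_ifs <;> first | decide | (exfalso; omega)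
  · -- Hc3
    have hm : m ≠ 0 := ne_snd (mem_pair_compl.mp hy).2
    have hv := vne_of_ne0 hm
    rw [val_sub_one hm]
    simp only [s2CD, s2DC]; split_ifs <;> first | decide | (exfalso; omega)
  · -- Hd1
    have hm : m ≠ 0 := ne_snd (mem_pair_compl.mp hx).1
    have hv := vne_of_ne0 hm
    simp only [s2AD, s2DC]; split_ifs <;> first | decide | (exfalso; omega)
  · -- Hd2
    have hm : m ≠ 0 := ne_snd (mem_pair_compl.mp hx).1
    have hv := vne_of_ne0 hm
    rw [val_sub_one hm]
    simp only [s2AD, s2CD]; split_ifs <;> first | decide | (exfalso; omega)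
  · -- Hd3
    rcases eq_or_ne m 0 with rfl | hm
    · rw [zero_sub_one_val (by omega), ZMod.val_zero]
      simp only [s2DC, s2CD]; split_ifs <;> first | decide | (exfalso; omega)
    · have hv := vne_of_ne0 hm
      rw [val_sub_one hm]
      simp only [s2DC, s2CD]; split_ifs <;> first | decide | (exfalso; omega)
end schemes

section schemes34
variable {k : ℕ}

set_option maxHeartbeats 3200000 in
lemma scheme3 (hk : 5 ≤ k) (hodd : Odd k) :
    ThreeEdgeColorable ((flowerSnark k).induce
      ({((1:Fin 4),(0:ZMod k)), ((1:Fin 4),(1:ZMod k))}ᶜ : Set (V k))) := by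
  haveI : NeZero k := ⟨by omega⟩
  have hko := Nat.odd_iff.mp hodd
  have h1 := one_ne_zero' hk
  have h2 := two_ne_zero' hk
  refine verify h1 h2 _ (s3AB k) (s3AC k) (s3AD k) (s3BB k) (s3CD k) (s3DC k)
    ?_ ?_ ?_ ?_ ?_ ?_ ?_ ?_ ?_ ?_ ?_ ?_ <;>
    intro m hx hy hz <;>
    (have hlt := ZMod.val_lt m)
  · simp only [s3AB, s3AC]; split_ifs <;> first | decide | (exfalso; omega)
  · -- Hbd : need m ∉ {0,1} from (1,m) ∈ S
    have hm0 : m ≠ 0 := ne_snd (mem_pair_compl.mp hy).1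
    have hm1 : m ≠ 1 := ne_snd (mem_pair_compl.mp hy).2
    have hv0 := vne_of_ne0 hm0
    have hv1 := vne_of_ne_one (by omega) hm1
    simp only [s3AB, s3AD]; split_ifs <;> first | decide | (exfalso; omega)
  · simp only [s3AC, s3AD]; split_ifs <;> first | decide | (exfalso; omega)
  · simp only [s3AB, s3BB]; split_ifs <;> first | decide | (exfalso; omega)
  · -- Hb2 : (1,m) ∈ S, (1,m-1) ∈ S
    have hm0 : m ≠ 0 := ne_snd (mem_pair_compl.mp hy).1
    have hm1 : m ≠ 1 := ne_snd (mem_pair_compl.mp hy).2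
    have hm2 : m ≠ 2 := fun h => ne_snd (mem_pair_compl.mp hz).2 (by rw [h]; ring)
    have hv0 := vne_of_ne0 hm0
    have hv1 := vne_of_ne_one (by omega) hm1
    have hv2 := vne_of_ne_two (by omega) hm2
    rw [val_sub_one hm0]
    simp only [s3AB, s3BB]; split_ifs <;> first | decide | (exfalso; omega)
  · -- Hb3 : (1,m-1) hx, (1,m) hy, (1,m+1) hz
    have hm0 : m ≠ 0 := ne_snd (mem_pair_compl.mp hy).1
    have hm1 : m ≠ 1 := ne_snd (mem_pair_compl.mp hy).2
    have hm2 : m ≠ 2 := fun h => ne_snd (mem_pair_compl.mp hx).2 (by rw [h]; ring)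
    have hvt : m.val ≠ k - 1 := vne_top (ne_snd (mem_pair_compl.mp hz).1)
    have hv0 := vne_of_ne0 hm0
    have hv1 := vne_of_ne_one (by omega) hm1
    have hv2 := vne_of_ne_two (by omega) hm2
    rw [val_sub_one hm0]
    simp only [s3BB]; split_ifs <;> first | decide | (exfalso; omega)
  · simp only [s3AC, s3CD]; split_ifs <;> first | decide | (exfalso; omega)
  · -- Hc2
    rcases eq_or_ne m 0 with rfl | hm
    · rw [zero_sub_one_val (by omega), ZMod.val_zero]
      simp only [s3AC, s3DC]; split_ifs <;> first | decide | (exfalso; omega)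
    · have hv := vne_of_ne0 hm
      rw [val_sub_one hm]
      simp only [s3AC, s3DC]; split_ifs <;> first | decide | (exfalso; omega)
  · -- Hc3
    rcases eq_or_ne m 0 with rfl | hm
    · rw [zero_sub_one_val (by omega), ZMod.val_zero]
      simp only [s3CD, s3DC]; split_ifs <;> first | decide | (exfalso; omega)
    · have hv := vne_of_ne0 hm
      rw [val_sub_one hm]
      simp only [s3CD, s3DC]; split_ifs <;> first | decide | (exfalso; omega)
  · simp only [s3AD, s3DC]; split_ifs <;> first | decide | (exfalso; omega)
  · -- Hd2
    rcases eq_or_ne m 0 with rfl | hm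
    · rw [zero_sub_one_val (by omega), ZMod.val_zero]
      simp only [s3AD, s3CD]; split_ifs <;> first | decide | (exfalso; omega)
    · have hv := vne_of_ne0 hm
      rw [val_sub_one hm]
      simp only [s3AD, s3CD]; split_ifs <;> first | decide | (exfalso; omega)
  · -- Hd3
    rcases eq_or_ne m 0 with rfl | hm
    · rw [zero_sub_one_val (by omega), ZMod.val_zero]
      simp only [s3DC, s3CD]; split_ifs <;> first | decide | (exfalso; omega)
    · have hv := vne_of_ne0 hm
      rw [val_sub_one hm]
      simp only [s3DC, s3CD]; split_ifs <;> first | decide | (exfalso; omega)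

set_option maxHeartbeats 3200000 in
lemma scheme4 (hk : 5 ≤ k) (hodd : Odd k) :
    ThreeEdgeColorable ((flowerSnark k).induce
      ({((2:Fin 4),(0:ZMod k)), ((3:Fin 4),(1:ZMod k))}ᶜ : Set (V k))) := by
  haveI : NeZero k := ⟨by omega⟩
  have hko := Nat.odd_iff.mp hodd
  have h1 := one_ne_zero' hk
  have h2 := two_ne_zero' hk
  refine verify h1 h2 _ s4AB s4AC s4AD s4BB s4CD s4DC
    ?_ ?_ ?_ ?_ ?_ ?_ ?_ ?_ ?_ ?_ ?_ ?_ <;>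
    intro m hx hy hz <;>
    (have hlt := ZMod.val_lt m)
  · -- Hbc : (2,m) ∈ S → m ≠ 0
    have hm0 : m ≠ 0 := ne_snd (mem_pair_compl.mp hz).1
    have hv0 := vne_of_ne0 hm0
    simp only [s4AB, s4AC]; split_ifs <;> first | decide | (exfalso; omega)
  · -- Hbd : (3,m) ∈ S → m ≠ 1
    have hm1 : m ≠ 1 := ne_snd (mem_pair_compl.mp hz).2
    have hv1 := vne_of_ne_one (by omega) hm1
    simp only [s4AB, s4AD]; split_ifs <;> first | decide | (exfalso; omega)
  · -- Hcd
    have hm0 : m ≠ 0 := ne_snd (mem_pair_compl.mp hy).1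
    have hm1 : m ≠ 1 := ne_snd (mem_pair_compl.mp hz).2
    have hv0 := vne_of_ne0 hm0
    have hv1 := vne_of_ne_one (by omega) hm1
    simp only [s4AC, s4AD]; split_ifs <;> first | decide | (exfalso; omega)
  · simp only [s4AB, s4BB]; split_ifs <;> first | decide | (exfalso; omega)
  · -- Hb2
    rcases eq_or_ne m 0 with rfl | hm
    · rw [zero_sub_one_val (by omega), ZMod.val_zero]
      simp only [s4AB, s4BB]; split_ifs <;> first | decide | (exfalso; omega)
    · have hv := vne_of_ne0 hm
      rw [val_sub_one hm]
      simp only [s4AB, s4BB]; split_ifs <;> first | decide | (exfalso; omega)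
  · -- Hb3
    rcases eq_or_ne m 0 with rfl | hm
    · rw [zero_sub_one_val (by omega), ZMod.val_zero]
      simp only [s4BB]; split_ifs <;> first | decide | (exfalso; omega)
    · have hv := vne_of_ne0 hm
      rw [val_sub_one hm]
      simp only [s4BB]; split_ifs <;> first | decide | (exfalso; omega)
  · -- Hc1 : (2,m) ∈ S → m ≠ 0
    have hm0 : m ≠ 0 := ne_snd (mem_pair_compl.mp hy).1
    have hv0 := vne_of_ne0 hm0
    simp only [s4AC, s4CD]; split_ifs <;> first | decide | (exfalso; omega)
  · -- Hc2 : (2,m) hy → m ≠ 0 ; (3,m-1) hz → m ≠ 2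
    have hm0 : m ≠ 0 := ne_snd (mem_pair_compl.mp hy).1
    have hm2 : m ≠ 2 := fun h => ne_snd (mem_pair_compl.mp hz).2 (by rw [h]; ring)
    have hv0 := vne_of_ne0 hm0
    have hv2 := vne_of_ne_two (by omega) hm2
    rw [val_sub_one hm0]
    simp only [s4AC, s4DC]; split_ifs <;> first | decide | (exfalso; omega)
  · -- Hc3 : (3,m-1) hx → m ≠ 2 ; (2,m) hy → m ≠ 0
    have hm0 : m ≠ 0 := ne_snd (mem_pair_compl.mp hy).1
    have hm2 : m ≠ 2 := fun h => ne_snd (mem_pair_compl.mp hx).2 (by rw [h]; ring)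
    have hv0 := vne_of_ne0 hm0
    have hv2 := vne_of_ne_two (by omega) hm2
    rw [val_sub_one hm0]
    simp only [s4CD, s4DC]; split_ifs <;> first | decide | (exfalso; omega)
  · simp only [s4AD, s4DC]; split_ifs <;> first | decide | (exfalso; omega)
  · -- Hd2 : (3,m) hy → m ≠ 1
    have hm1 : m ≠ 1 := ne_snd (mem_pair_compl.mp hy).2
    have hv1 := vne_of_ne_one (by omega) hm1
    rcases eq_or_ne m 0 with rfl | hm
    · rw [zero_sub_one_val (by omega), ZMod.val_zero]
      simp only [s4AD, s4CD]; split_ifs <;> first | decide | (exfalso; omega)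
    · have hv := vne_of_ne0 hm
      rw [val_sub_one hm]
      simp only [s4AD, s4CD]; split_ifs <;> first | decide | (exfalso; omega)
  · -- Hd3 : (2,m-1) hx → m ≠ 1
    have hm1 : m ≠ 1 := fun h => ne_snd (mem_pair_compl.mp hx).1 (by rw [h]; ring)
    have hv1 := vne_of_ne_one (by omega) hm1
    rcases eq_or_ne m 0 with rfl | hm
    · rw [zero_sub_one_val (by omega), ZMod.val_zero]
      simp only [s4DC, s4CD]; split_ifs <;> first | decide | (exfalso; omega)
    · have hv := vne_of_ne0 hm
      rw [val_sub_one hm]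
      simp only [s4DC, s4CD]; split_ifs <;> first | decide | (exfalso; omega)

end schemes34

section crit
variable {k : ℕ}

lemma transfer (φ : V k → V k) (hinj : Function.Injective φ)
    (hhom : ∀ p q : V k, (flowerSnark k).Adj p q → (flowerSnark k).Adj (φ p) (φ q))
    (u v : V k)
    (h : ThreeEdgeColorable ((flowerSnark k).induce ({φ u, φ v}ᶜ : Set (V k)))) :
    ThreeEdgeColorable ((flowerSnark k).induce ({u, v}ᶜ : Set (V k))) := by
  obtain ⟨f, hf⟩ := h
  have hψmem : ∀ p : V k, p ∈ ({u,v}ᶜ : Set (V k)) → φ p ∈ ({φ u, φ v}ᶜ : Set (V k)) := by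
    intro p hp
    rw [mem_pair_compl] at hp ⊢
    exact ⟨fun hh => hp.1 (hinj hh), fun hh => hp.2 (hinj hh)⟩
  let ψ : ({u,v}ᶜ : Set (V k)) → ({φ u, φ v}ᶜ : Set (V k)) := fun x => ⟨φ x.1, hψmem x.1 x.2⟩
  have hψinj : Function.Injective ψ := fun a b hab => Subtype.ext (hinj (congrArg Subtype.val hab))
  refine ⟨fun e => f (e.map ψ), ?_⟩
  intro e1 he1 e2 he2 hne hsh
  obtain ⟨w, hw1, hw2⟩ := hsh
  induction e1 with
  | _ a b =>
  induction e2 with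
  | _ c d =>
  rw [SimpleGraph.mem_edgeSet] at he1 he2
  simp only [Sym2.map_pair_eq]
  apply hf
  · exact (SimpleGraph.mem_edgeSet _).2 (hhom _ _ he1)
  · exact (SimpleGraph.mem_edgeSet _).2 (hhom _ _ he2)
  · intro hh
    exact hne (Sym2.map.injective hψinj (a₁ := s(a,b)) (a₂ := s(c,d))
      (by simpa [Sym2.map_pair_eq] using hh))
  · refine ⟨ψ w, ?_, ?_⟩
    · rw [Sym2.mem_iff] at hw1
      rcases hw1 with rfl | rfl
      · exact Sym2.mem_mk_left _ _
      · exact Sym2.mem_mk_right _ _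
    · rw [Sym2.mem_iff] at hw2
      rcases hw2 with rfl | rfl
      · exact Sym2.mem_mk_left _ _
      · exact Sym2.mem_mk_right _ _

def rot (t : ZMod k) : V k → V k := fun p => (p.1, p.2 + t)

lemma rot_inj (t : ZMod k) : Function.Injective (rot (k := k) t) := by
  rintro ⟨x, m⟩ ⟨y, n⟩ h
  rw [Prod.ext_iff] at h ⊢
  exact ⟨h.1, by have := h.2; simpa using add_right_cancel this⟩

lemma rot_hom (t : ZMod k) (p q : V k) (h : (flowerSnark k).Adj p q) :
    (flowerSnark k).Adj (rot t p) (rot t q) := by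
  rw [flowerSnark, SimpleGraph.fromRel_adj] at h ⊢
  obtain ⟨hne, hrel⟩ := h
  refine ⟨fun hh => hne (rot_inj t hh), ?_⟩
  have key : ∀ a b : V k, (∃ i : ZMod k,
      (a = (0, i) ∧ (b = (1, i) ∨ b = (2, i) ∨ b = (3, i))) ∨
      (a = (1, i) ∧ b = (1, i + 1)) ∨
      (a = (2, i) ∧ b = (3, i + 1)) ∨
      (a = (3, i) ∧ b = (2, i + 1))) → (∃ i : ZMod k,
      (rot t a = (0, i) ∧ (rot t b = (1, i) ∨ rot t b = (2, i) ∨ rot t b = (3, i))) ∨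
      (rot t a = (1, i) ∧ rot t b = (1, i + 1)) ∨
      (rot t a = (2, i) ∧ rot t b = (3, i + 1)) ∨
      (rot t a = (3, i) ∧ rot t b = (2, i + 1))) := by
    rintro a b ⟨i, ⟨rfl, (rfl | rfl | rfl)⟩ | ⟨rfl, rfl⟩ | ⟨rfl, rfl⟩ | ⟨rfl, rfl⟩⟩
    · exact ⟨i + t, Or.inl ⟨rfl, Or.inl rfl⟩⟩
    · exact ⟨i + t, Or.inl ⟨rfl, Or.inr (Or.inl rfl)⟩⟩
    · exact ⟨i + t, Or.inl ⟨rfl, Or.inr (Or.inr rfl)⟩⟩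
    · exact ⟨i + t, Or.inr (Or.inl ⟨rfl, by show (1, i+1+t) = (1, i+t+1); rw [add_right_comm]⟩)⟩
    · exact ⟨i + t, Or.inr (Or.inr (Or.inl ⟨rfl, by show (3, i+1+t) = (3, i+t+1); rw [add_right_comm]⟩))⟩
    · exact ⟨i + t, Or.inr (Or.inr (Or.inr ⟨rfl, by show (2, i+1+t) = (2, i+t+1); rw [add_right_comm]⟩))⟩
  exact hrel.imp (key p q) (key q p)

def cdswap : V k → V k := fun p => (![0,1,3,2] p.1, p.2)

lemma cdswap_inj : Function.Injective (cdswap (k := k)) := by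
  have hv : Function.Injective (![0,1,3,2] : Fin 4 → Fin 4) := by decide
  rintro ⟨x, m⟩ ⟨y, n⟩ h
  rw [Prod.ext_iff] at h ⊢
  exact ⟨hv h.1, h.2⟩

lemma cdswap_hom (p q : V k) (h : (flowerSnark k).Adj p q) :
    (flowerSnark k).Adj (cdswap p) (cdswap q) := by
  rw [flowerSnark, SimpleGraph.fromRel_adj] at h ⊢
  obtain ⟨hne, hrel⟩ := h
  refine ⟨fun hh => hne (cdswap_inj hh), ?_⟩
  have key : ∀ a b : V k, (∃ i : ZMod k,
      (a = (0, i) ∧ (b = (1, i) ∨ b = (2, i) ∨ b = (3, i))) ∨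
      (a = (1, i) ∧ b = (1, i + 1)) ∨
      (a = (2, i) ∧ b = (3, i + 1)) ∨
      (a = (3, i) ∧ b = (2, i + 1))) → (∃ i : ZMod k,
      (cdswap a = (0, i) ∧ (cdswap b = (1, i) ∨ cdswap b = (2, i) ∨ cdswap b = (3, i))) ∨
      (cdswap a = (1, i) ∧ cdswap b = (1, i + 1)) ∨
      (cdswap a = (2, i) ∧ cdswap b = (3, i + 1)) ∨
      (cdswap a = (3, i) ∧ cdswap b = (2, i + 1))) := by
    rintro a b ⟨i, ⟨rfl, (rfl | rfl | rfl)⟩ | ⟨rfl, rfl⟩ | ⟨rfl, rfl⟩ | ⟨rfl, rfl⟩⟩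
    · exact ⟨i, Or.inl ⟨rfl, Or.inl rfl⟩⟩
    · exact ⟨i, Or.inl ⟨rfl, Or.inr (Or.inr rfl)⟩⟩
    · exact ⟨i, Or.inl ⟨rfl, Or.inr (Or.inl rfl)⟩⟩
    · exact ⟨i, Or.inr (Or.inl ⟨rfl, rfl⟩)⟩
    · exact ⟨i, Or.inr (Or.inr (Or.inr ⟨rfl, rfl⟩))⟩
    · exact ⟨i, Or.inr (Or.inr (Or.inl ⟨rfl, rfl⟩))⟩
  exact hrel.imp (key p q) (key q p)

lemma crit_aux (hk : 5 ≤ k) (hodd : Odd k) (u v : V k)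
    (h : ∃ i : ZMod k,
      (u = (0, i) ∧ (v = (1, i) ∨ v = (2, i) ∨ v = (3, i))) ∨
      (u = (1, i) ∧ v = (1, i + 1)) ∨
      (u = (2, i) ∧ v = (3, i + 1)) ∨
      (u = (3, i) ∧ v = (2, i + 1))) :
    ThreeEdgeColorable ((flowerSnark k).induce ({u, v}ᶜ : Set (V k))) := by
  obtain ⟨i, ⟨rfl, (rfl | rfl | rfl)⟩ | ⟨rfl, rfl⟩ | ⟨rfl, rfl⟩ | ⟨rfl, rfl⟩⟩ := h
  · -- a_i b_i : scheme1 via rot (-i)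
    apply transfer (rot (-i)) (rot_inj _) (rot_hom _)
    have e1 : rot (-i) ((0:Fin 4), i) = ((0:Fin 4), (0:ZMod k)) := by
      show ((0:Fin 4), i + -i) = _; rw [add_neg_cancel]
    have e2 : rot (-i) ((1:Fin 4), i) = ((1:Fin 4), (0:ZMod k)) := by
      show ((1:Fin 4), i + -i) = _; rw [add_neg_cancel]
    rw [e1, e2]
    exact scheme1 hk hodd
  · -- a_i c_i : scheme2 via rot (-i)
    apply transfer (rot (-i)) (rot_inj _) (rot_hom _)
    have e1 : rot (-i) ((0:Fin 4), i) = ((0:Fin 4), (0:ZMod k)) := by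
      show ((0:Fin 4), i + -i) = _; rw [add_neg_cancel]
    have e2 : rot (-i) ((2:Fin 4), i) = ((2:Fin 4), (0:ZMod k)) := by
      show ((2:Fin 4), i + -i) = _; rw [add_neg_cancel]
    rw [e1, e2]
    exact scheme2 hk hodd
  · -- a_i d_i : scheme2 via cdswap ∘ rot (-i)
    apply transfer (fun p => cdswap (rot (-i) p))
      (fun a b hab => rot_inj _ (cdswap_inj hab))
      (fun p q hpq => cdswap_hom _ _ (rot_hom _ _ _ hpq))
    have e1 : cdswap (rot (-i) ((0:Fin 4), i)) = ((0:Fin 4), (0:ZMod k)) := by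
      show cdswap ((0:Fin 4), i + -i) = _; rw [add_neg_cancel]; rfl
    have e2 : cdswap (rot (-i) ((3:Fin 4), i)) = ((2:Fin 4), (0:ZMod k)) := by
      show cdswap ((3:Fin 4), i + -i) = _; rw [add_neg_cancel]; rfl
    rw [e1, e2]
    exact scheme2 hk hodd
  · -- b_i b_{i+1} : scheme3
    apply transfer (rot (-i)) (rot_inj _) (rot_hom _)
    have e1 : rot (-i) ((1:Fin 4), i) = ((1:Fin 4), (0:ZMod k)) := by
      show ((1:Fin 4), i + -i) = _; rw [add_neg_cancel]
    have e2 : rot (-i) ((1:Fin 4), i + 1) = ((1:Fin 4), (1:ZMod k)) := by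
      show ((1:Fin 4), i + 1 + -i) = _
      rw [show i + 1 + -i = 1 by ring]
    rw [e1, e2]
    exact scheme3 hk hodd
  · -- c_i d_{i+1} : scheme4
    apply transfer (rot (-i)) (rot_inj _) (rot_hom _)
    have e1 : rot (-i) ((2:Fin 4), i) = ((2:Fin 4), (0:ZMod k)) := by
      show ((2:Fin 4), i + -i) = _; rw [add_neg_cancel]
    have e2 : rot (-i) ((3:Fin 4), i + 1) = ((3:Fin 4), (1:ZMod k)) := by
      show ((3:Fin 4), i + 1 + -i) = _
      rw [show i + 1 + -i = 1 by ring]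
    rw [e1, e2]
    exact scheme4 hk hodd
  · -- d_i c_{i+1} : scheme4 via cdswap ∘ rot (-i)
    apply transfer (fun p => cdswap (rot (-i) p))
      (fun a b hab => rot_inj _ (cdswap_inj hab))
      (fun p q hpq => cdswap_hom _ _ (rot_hom _ _ _ hpq))
    have e1 : cdswap (rot (-i) ((3:Fin 4), i)) = ((2:Fin 4), (0:ZMod k)) := by
      show cdswap ((3:Fin 4), i + -i) = _; rw [add_neg_cancel]; rfl
    have e2 : cdswap (rot (-i) ((2:Fin 4), i + 1)) = ((3:Fin 4), (1:ZMod k)) := by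
      show cdswap ((2:Fin 4), i + 1 + -i) = _
      rw [show i + 1 + -i = 1 by ring]; rfl
    rw [e1, e2]
    exact scheme4 hk hodd

lemma critical (hk : 5 ≤ k) (hodd : Odd k) : Critical (flowerSnark k) := by
  intro u v huv
  rw [flowerSnark, SimpleGraph.fromRel_adj] at huv
  obtain ⟨hne, hrel | hrel⟩ := huv
  · exact crit_aux hk hodd u v hrel
  · rw [Set.pair_comm u v]
    exact crit_aux hk hodd v u hrel

end crit

section snark
variable {k : ℕ}

lemma fin4cases : ∀ y : Fin 4, y = 0 ∨ y = 1 ∨ y = 2 ∨ y = 3 := by decide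

lemma connected (hk : 5 ≤ k) : (flowerSnark k).Connected := by
  haveI : NeZero k := ⟨by omega⟩
  have h1 := one_ne_zero' hk
  have h2 := two_ne_zero' hk
  rw [SimpleGraph.connected_iff]
  refine ⟨?_, ⟨((0:Fin 4), (0:ZMod k))⟩⟩
  have hb : ∀ n : ℕ, (flowerSnark k).Reachable ((1:Fin 4), ((n:ℕ):ZMod k)) (1, (0:ZMod k)) := by
    intro n
    induction n with
    | zero => rw [Nat.cast_zero]
    | succ n ih =>
        refine SimpleGraph.Reachable.trans ?_ ih
        apply SimpleGraph.Adj.reachable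
        rw [Nat.cast_succ]
        exact (adj_b_iff h1 h2 _ _).2 (Or.inr (Or.inr (by rw [add_sub_cancel_right])))
  have hv : ∀ p : V k, (flowerSnark k).Reachable p (1, (0:ZMod k)) := by
    rintro ⟨x, m⟩
    have hm : (flowerSnark k).Reachable (1, m) (1, (0:ZMod k)) := by
      have := hb m.val
      rwa [natCast_val_self] at this
    rcases fin4cases x with rfl | rfl | rfl | rfl
    · exact (((adj_a_iff m _).2 (Or.inl rfl)).reachable).trans hm
    · exact hm
    · refine SimpleGraph.Reachable.trans ?_ hm
      exact (((adj_c_iff h1 h2 m _).2 (Or.inl rfl)).reachable).trans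
        (((adj_a_iff m _).2 (Or.inl rfl)).reachable)
    · refine SimpleGraph.Reachable.trans ?_ hm
      exact (((adj_d_iff h1 h2 m _).2 (Or.inl rfl)).reachable).trans
        (((adj_a_iff m _).2 (Or.inl rfl)).reachable)
  exact fun u v => (hv u).trans (hv v).symm

lemma ne_fst {x y : Fin 4} {m n : ZMod k} (h : x ≠ y) : ((x,m) : V k) ≠ (y,n) :=
  fun hh => h (congrArg Prod.fst hh)

lemma cubic (hk : 5 ≤ k) (hodd : Odd k) : IsCubic (flowerSnark k) := by
  haveI : NeZero k := ⟨by omega⟩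
  have h1 := one_ne_zero' hk
  have h2 := two_ne_zero' hk
  rintro ⟨x, m⟩
  rcases fin4cases x with rfl | rfl | rfl | rfl
  · refine Set.ncard_eq_three.2 ⟨(1,m), (2,m), (3,m), ne_fst (by decide), ne_fst (by decide),
      ne_fst (by decide), ?_⟩
    ext q
    rw [SimpleGraph.mem_neighborSet, adj_a_iff]
    simp [Set.mem_insert_iff]
  · refine Set.ncard_eq_three.2 ⟨(0,m), (1,m+1), (1,m-1), ne_fst (by decide), ne_fst (by decide),
      fun h => (sub_one_ne h2 m) (congrArg Prod.snd h).symm, ?_⟩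
    ext q
    rw [SimpleGraph.mem_neighborSet, adj_b_iff h1 h2]
    simp [Set.mem_insert_iff]
  · refine Set.ncard_eq_three.2 ⟨(0,m), (3,m+1), (3,m-1), ne_fst (by decide), ne_fst (by decide),
      fun h => (sub_one_ne h2 m) (congrArg Prod.snd h).symm, ?_⟩
    ext q
    rw [SimpleGraph.mem_neighborSet, adj_c_iff h1 h2]
    simp [Set.mem_insert_iff]
  · refine Set.ncard_eq_three.2 ⟨(0,m), (2,m+1), (2,m-1), ne_fst (by decide), ne_fst (by decide),
      fun h => (sub_one_ne h2 m) (congrArg Prod.snd h).symm, ?_⟩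
    ext q
    rw [SimpleGraph.mem_neighborSet, adj_d_iff h1 h2]
    simp [Set.mem_insert_iff]

lemma not_colorable (hk : 5 ≤ k) (hodd : Odd k) : ¬ ThreeEdgeColorable (flowerSnark k) := by
  haveI : NeZero k := ⟨by omega⟩
  have h1 := one_ne_zero' hk
  have h2 := two_ne_zero' hk
  have hko := Nat.odd_iff.mp hodd
  rintro ⟨f, hf⟩
  have hap : ∀ p q r : V k, (flowerSnark k).Adj p q → (flowerSnark k).Adj p r → q ≠ r →
      f s(p,q) ≠ f s(p,r) := by
    intro p q r hq hr hqr
    apply hf _ ((SimpleGraph.mem_edgeSet _).2 hq) _ ((SimpleGraph.mem_edgeSet _).2 hr)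
    · intro hh
      rw [Sym2.eq_iff] at hh
      rcases hh with ⟨-, h⟩ | ⟨h, -⟩
      · exact hqr h
      · exact hr.ne' h.symm
    · exact ⟨p, Sym2.mem_mk_left _ _, Sym2.mem_mk_left _ _⟩
  -- the step over one section
  have hstep : ∀ j : ZMod k,
      P (f s(((1:Fin 4),j+1),((1:Fin 4),j+1+1)))
        (f s(((2:Fin 4),j+1),((3:Fin 4),j+1+1)))
        (f s(((3:Fin 4),j+1),((2:Fin 4),j+1+1)))
      = ! P (f s(((1:Fin 4),j),((1:Fin 4),j+1)))
            (f s(((2:Fin 4),j),((3:Fin 4),j+1)))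
            (f s(((3:Fin 4),j),((2:Fin 4),j+1))) := by
    intro j
    -- adjacencies at index j+1
    have ad_ab : (flowerSnark k).Adj ((0:Fin 4),j+1) ((1:Fin 4),j+1) := (adj_a_iff _ _).2 (Or.inl rfl)
    have ad_ac : (flowerSnark k).Adj ((0:Fin 4),j+1) ((2:Fin 4),j+1) :=
      (adj_a_iff _ _).2 (Or.inr (Or.inl rfl))
    have ad_ad : (flowerSnark k).Adj ((0:Fin 4),j+1) ((3:Fin 4),j+1) :=
      (adj_a_iff _ _).2 (Or.inr (Or.inr rfl))
    have ad_bprev : (flowerSnark k).Adj ((1:Fin 4),j+1) ((1:Fin 4),j) :=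
      (adj_b_iff h1 h2 _ _).2 (Or.inr (Or.inr (by rw [add_sub_cancel_right])))
    have ad_bnext : (flowerSnark k).Adj ((1:Fin 4),j+1) ((1:Fin 4),j+1+1) :=
      (adj_b_iff h1 h2 _ _).2 (Or.inr (Or.inl rfl))
    have ad_ba : (flowerSnark k).Adj ((1:Fin 4),j+1) ((0:Fin 4),j+1) :=
      (adj_b_iff h1 h2 _ _).2 (Or.inl rfl)
    have ad_cprev : (flowerSnark k).Adj ((2:Fin 4),j+1) ((3:Fin 4),j) :=
      (adj_c_iff h1 h2 _ _).2 (Or.inr (Or.inr (by rw [add_sub_cancel_right])))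
    have ad_cnext : (flowerSnark k).Adj ((2:Fin 4),j+1) ((3:Fin 4),j+1+1) :=
      (adj_c_iff h1 h2 _ _).2 (Or.inr (Or.inl rfl))
    have ad_ca : (flowerSnark k).Adj ((2:Fin 4),j+1) ((0:Fin 4),j+1) :=
      (adj_c_iff h1 h2 _ _).2 (Or.inl rfl)
    have ad_dprev : (flowerSnark k).Adj ((3:Fin 4),j+1) ((2:Fin 4),j) :=
      (adj_d_iff h1 h2 _ _).2 (Or.inr (Or.inr (by rw [add_sub_cancel_right])))
    have ad_dnext : (flowerSnark k).Adj ((3:Fin 4),j+1) ((2:Fin 4),j+1+1) :=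
      (adj_d_iff h1 h2 _ _).2 (Or.inr (Or.inl rfl))
    have ad_da : (flowerSnark k).Adj ((3:Fin 4),j+1) ((0:Fin 4),j+1) :=
      (adj_d_iff h1 h2 _ _).2 (Or.inl rfl)
    have hne2 : ((j:ZMod k)) ≠ j+1+1 := by
      intro h; exact h2 (by linear_combination -h)
    -- swap forms
    have sw_b : f s(((1:Fin 4),j),((1:Fin 4),j+1)) = f s(((1:Fin 4),j+1),((1:Fin 4),j)) := by
      rw [Sym2.eq_swap]
    have sw_c : f s(((3:Fin 4),j),((2:Fin 4),j+1)) = f s(((2:Fin 4),j+1),((3:Fin 4),j)) := by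
      rw [Sym2.eq_swap]
    have sw_d : f s(((2:Fin 4),j),((3:Fin 4),j+1)) = f s(((3:Fin 4),j+1),((2:Fin 4),j)) := by
      rw [Sym2.eq_swap]
    have sw_ab : f s(((0:Fin 4),j+1),((1:Fin 4),j+1)) = f s(((1:Fin 4),j+1),((0:Fin 4),j+1)) := by
      rw [Sym2.eq_swap]
    have sw_ac : f s(((0:Fin 4),j+1),((2:Fin 4),j+1)) = f s(((2:Fin 4),j+1),((0:Fin 4),j+1)) := by
      rw [Sym2.eq_swap]
    have sw_ad : f s(((0:Fin 4),j+1),((3:Fin 4),j+1)) = f s(((3:Fin 4),j+1),((0:Fin 4),j+1)) := by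
      rw [Sym2.eq_swap]
    apply step
    -- hab, hac, hbc at a_{j+1}
    · exact hap _ _ _ ad_ab ad_ac (ne_fst (by decide))
    · exact hap _ _ _ ad_ab ad_ad (ne_fst (by decide))
    · exact hap _ _ _ ad_ac ad_ad (ne_fst (by decide))
    -- h1 h2 h3 at b_{j+1}
    · rw [sw_b]
      exact hap _ _ _ ad_bprev ad_bnext (fun h => hne2 (congrArg Prod.snd h))
    · rw [sw_b, sw_ab]
      exact hap _ _ _ ad_bprev ad_ba (ne_fst (by decide))
    · rw [sw_ab]
      exact hap _ _ _ ad_bnext ad_ba (ne_fst (by decide))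
    -- h4 h5 h6 at c_{j+1}
    · rw [sw_c]
      exact hap _ _ _ ad_cprev ad_cnext (fun h => hne2 (congrArg Prod.snd h))
    · rw [sw_c, sw_ac]
      exact hap _ _ _ ad_cprev ad_ca (ne_fst (by decide))
    · rw [sw_ac]
      exact hap _ _ _ ad_cnext ad_ca (ne_fst (by decide))
    -- h7 h8 h9 at d_{j+1}
    · rw [sw_d]
      exact hap _ _ _ ad_dprev ad_dnext (fun h => hne2 (congrArg Prod.snd h))
    · rw [sw_d, sw_ad]
      exact hap _ _ _ ad_dprev ad_da (ne_fst (by decide))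
    · rw [sw_ad]
      exact hap _ _ _ ad_dnext ad_da (ne_fst (by decide))
  -- iterate
  set Q : ℕ → Bool := fun n => P (f s(((1:Fin 4),((n:ℕ):ZMod k)),((1:Fin 4),((n:ℕ):ZMod k)+1)))
    (f s(((2:Fin 4),((n:ℕ):ZMod k)),((3:Fin 4),((n:ℕ):ZMod k)+1)))
    (f s(((3:Fin 4),((n:ℕ):ZMod k)),((2:Fin 4),((n:ℕ):ZMod k)+1))) with hQ
  have hQs : ∀ n : ℕ, Q (n+1) = ! Q n := by
    intro n
    have := hstep ((n:ℕ) : ZMod k)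
    rw [hQ]
    simp only [Nat.cast_succ]
    exact this
  have hQn : ∀ n : ℕ, Q n = (if n % 2 = 0 then Q 0 else ! Q 0) := by
    intro n
    induction n with
    | zero => simp
    | succ n ih =>
        rw [hQs n, ih]
        rcases Nat.mod_two_eq_zero_or_one n with he | he
        · rw [if_pos he, if_neg (by omega : ¬ (n+1) % 2 = 0)]
        · rw [if_neg (by omega : ¬ n % 2 = 0), if_pos (by omega : (n+1) % 2 = 0),
            Bool.not_not]
  have hk0 : Q k = Q 0 := by
    rw [hQ]
    simp only [ZMod.natCast_self, Nat.cast_zero]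
  have hk1 : Q k = ! Q 0 := by
    rw [hQn k, if_neg (by omega : ¬ k % 2 = 0)]
  rw [hk0] at hk1
  simpa using hk1
end snark

end FS

/-- For every odd `k ≥ 5`, the flower (Isaacs) snark `J_k` is a
critical snark. -/
theorem flowerSnark_critical (k : ℕ) (hk : 5 ≤ k) (hodd : Odd k) :
    IsSnark (flowerSnark k) ∧ Critical (flowerSnark k) :=
  ⟨⟨FS.connected hk, FS.cubic hk hodd, FS.not_colorable hk hodd⟩, FS.critical hk hodd⟩
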